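/- Let J ≥ 2 be an integer, M₁ < M₂ real, U > 0 with J·U < M₂ - M₁, and let η_J be the convolution of J copies of U⁻¹·χ_{[0,U]} with χ_{[M₁, M₂ - J·U]}. Then η_J is (J-1) times continuously differentiable on ℝ. -/

import Mathlib

open MeasureTheory Set

/-- Convolution with the normalized kernel `U⁻¹ · χ_{[0,U]}`. -/
noncomputable def convBase (U : ℝ) (f : ℝ → ℝ) : ℝ → ℝ :=
  fun x => ∫ t, ((Icc (0:ℝ) U).indicator (fun _ => U⁻¹) t) * f (x - t)

/-- `η_J`: the convolution of `J` copies of `U⁻¹·χ_{[0,U]}` with `χ_{[M₁, M₂ - J·U]}`. -/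
noncomputable def etaJ (J : ℕ) (M₁ M₂ U : ℝ) : ℝ → ℝ :=
  (convBase U)^[J] ((Icc M₁ (M₂ - J * U)).indicator (fun _ => (1:ℝ)))

lemma convBase_eq_conv (U : ℝ) (f : ℝ → ℝ) :
    convBase U f =
      MeasureTheory.convolution ((Icc (0:ℝ) U).indicator (fun _ => U⁻¹)) f
        (ContinuousLinearMap.mul ℝ ℝ) volume := by
  rfl

lemma convBase_integrable {U : ℝ} {f : ℝ → ℝ} (hf : Integrable f) :
    Integrable (convBase U f) := by
  rw [convBase_eq_conv]
  refine Integrable.integrable_convolution _ ?_ hf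
  exact (integrable_indicator_iff measurableSet_Icc).2
    (integrableOn_const measure_Icc_lt_top.ne)

lemma convBase_eq_primitive {U : ℝ} (hU : 0 < U) {f : ℝ → ℝ} (hf : Integrable f) :
    convBase U f = fun x =>
      U⁻¹ * ((∫ t in (0:ℝ)..x, f t) - ∫ t in (0:ℝ)..(x - U), f t) := by
  funext x
  have h1 : convBase U f x = ∫ t in Icc (0:ℝ) U, U⁻¹ * f (x - t) := by
    rw [convBase, ← integral_indicator measurableSet_Icc]
    congr 1
    funext t
    by_cases ht : t ∈ Icc (0:ℝ) U <;> simp [indicator, ht]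
  rw [h1, MeasureTheory.integral_Icc_eq_integral_Ioc,
    ← intervalIntegral.integral_of_le hU.le, intervalIntegral.integral_const_mul,
    intervalIntegral.integral_comp_sub_left (f := f) (d := x)]
  have hsub : (∫ t in (x - U)..(x - 0), f t)
      = (∫ t in (0:ℝ)..x, f t) - ∫ t in (0:ℝ)..(x - U), f t := by
    rw [sub_zero]
    exact (intervalIntegral.integral_interval_sub_left
      (hf.intervalIntegrable) (hf.intervalIntegrable)).symm
  rw [hsub]

lemma convBase_continuous {U : ℝ} (hU : 0 < U) {f : ℝ → ℝ} (hf : Integrable f) :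
    Continuous (convBase U f) := by
  rw [convBase_eq_primitive hU hf]
  have hF : Continuous (fun x : ℝ => ∫ t in (0:ℝ)..x, f t) :=
    hf.continuous_primitive 0
  exact continuous_const.mul (hF.sub (hF.comp (continuous_id.sub continuous_const)))

lemma primitive_contDiff {n : ℕ} {f : ℝ → ℝ} (hf : Integrable f)
    (hc : ContDiff ℝ (n : ℕ∞) f) :
    ContDiff ℝ ((n + 1 : ℕ) : ℕ∞) (fun x : ℝ => ∫ t in (0:ℝ)..x, f t) := by
  have hcont : Continuous f := hc.continuous
  have hderiv : ∀ x : ℝ,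
      HasDerivAt (fun u : ℝ => ∫ t in (0:ℝ)..u, f t) (f x) x := fun x =>
    intervalIntegral.integral_hasDerivAt_right (hf.intervalIntegrable)
      (hcont.stronglyMeasurable.stronglyMeasurableAtFilter) hcont.continuousAt
  have hgoal : ContDiff ℝ ((n : WithTop ℕ∞) + 1) (fun x : ℝ => ∫ t in (0:ℝ)..x, f t) := by
    rw [contDiff_succ_iff_deriv]
    refine ⟨fun x => (hderiv x).differentiableAt, ?_, ?_⟩
    · intro h; simp at h
    · have hd : deriv (fun u : ℝ => ∫ t in (0:ℝ)..u, f t) = f := by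
        funext x; exact (hderiv x).deriv
      rw [hd]; exact_mod_cast hc
  exact_mod_cast hgoal

lemma convBase_contDiff {n : ℕ} {U : ℝ} (hU : 0 < U) {f : ℝ → ℝ}
    (hf : Integrable f) (hc : ContDiff ℝ (n : ℕ∞) f) :
    ContDiff ℝ ((n + 1 : ℕ) : ℕ∞) (convBase U f) := by
  rw [convBase_eq_primitive hU hf]
  have hF := primitive_contDiff hf hc
  exact contDiff_const.mul
    (hF.sub (hF.comp ((contDiff_id.sub contDiff_const))))

lemma iterate_convBase_contDiff {U : ℝ} (hU : 0 < U) {f : ℝ → ℝ}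
    (hf : Integrable f) (k : ℕ) :
    Integrable ((convBase U)^[k + 1] f) ∧
      ContDiff ℝ ((k : ℕ) : ℕ∞) ((convBase U)^[k + 1] f) := by
  induction k with
  | zero =>
    refine ⟨convBase_integrable hf, ?_⟩
    have h0 : ContDiff ℝ 0 (convBase U f) := contDiff_zero.2 (convBase_continuous hU hf)
    simp only [Function.iterate_one, Nat.cast_zero]
    exact_mod_cast h0
  | succ k ih =>
    rw [Function.iterate_succ_apply']
    exact ⟨convBase_integrable ih.1, convBase_contDiff hU ih.1 ih.2⟩

theorem etaJ_contDiff
    (J : ℕ) (hJ : 2 ≤ J) (M₁ M₂ U : ℝ) (hM : M₁ < M₂) (hU : 0 < U)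
    (hJU : (J : ℝ) * U < M₂ - M₁) :
    ContDiff ℝ ((J - 1 : ℕ) : ℕ∞) (etaJ J M₁ M₂ U) := by
  have hg : Integrable ((Icc M₁ (M₂ - (J : ℝ) * U)).indicator (fun _ => (1:ℝ))) :=
    (integrable_indicator_iff measurableSet_Icc).2
      (integrableOn_const measure_Icc_lt_top.ne)
  have h := (iterate_convBase_contDiff hU hg (J - 1)).2
  have hJ1 : J - 1 + 1 = J := by omega
  rw [hJ1] at h
  exact h
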